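/- Let γ ∈ Γ be a collection satisfying the bound condition. In the multilayer setting with widths n_0, …, n_L and layers h = (h_1, …, h_L), the number of attained multi signatures satisfies |𝒮_h| ≤ ‖B^{(γ)}_{n_L} M_{n_{L-1}, n_L} ⋯ B^{(γ)}_{n_1} M_{n_0, n_1} e_{n_0+1}‖₁, where e_{n_0+1} ∈ ℝ^{n_0+1} is the standard unit vector with value 1 at index n_0+1 and 0 elsewhere, and ‖·‖₁ is the L1 norm on vectors. -/

import Mathlib

open Matrix

noncomputable def relu {n n' : ℕ} (W : Matrix (Fin n') (Fin n) ℝ) (b : Fin n' → ℝ)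
    (x : Fin n → ℝ) : Fin n' → ℝ :=
  fun i => max 0 (W i ⬝ᵥ x + b i)

noncomputable def sig {n n' : ℕ} (W : Matrix (Fin n') (Fin n) ℝ) (b : Fin n' → ℝ)
    (x : Fin n → ℝ) : Fin n' → Bool :=
  fun i => decide (0 < W i ⬝ᵥ x + b i)

/-- Forward pass through the first `l` layers: `fwd n W b l = h_l ∘ ⋯ ∘ h_1`. -/
noncomputable def fwd (n : ℕ → ℕ) (W : ∀ l : ℕ, Matrix (Fin (n (l + 1))) (Fin (n l)) ℝ)
    (b : ∀ l : ℕ, Fin (n (l + 1)) → ℝ) : (l : ℕ) → (Fin (n 0) → ℝ) → (Fin (n l) → ℝ)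
  | 0 => fun x => x
  | l + 1 => fun x => relu (W l) (b l) (fwd n W b l x)

/-- Multi signature of length `m`:
`msig n W b m x = (S_{h_1}(x), S_{h_2}(h_1(x)), …, S_{h_m}(h_{m-1}∘⋯∘h_1(x)))`. -/
noncomputable def msig (n : ℕ → ℕ) (W : ∀ l : ℕ, Matrix (Fin (n (l + 1))) (Fin (n l)) ℝ)
    (b : ∀ l : ℕ, Fin (n (l + 1)) → ℝ) (m : ℕ) (x : Fin (n 0) → ℝ) :
    ∀ l : Fin m, Fin (n (l.val + 1)) → Bool :=
  fun l => sig (W l.val) (b l.val) (fwd n W b l.val x)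

/-- Number of active units of a binary vector `s`, i.e. `|s|`. -/
def cnt {k : ℕ} (s : Fin k → Bool) : ℕ := (Finset.univ.filter fun j => s j = true).card

/-- `min(n_0, |s_1|, …, |s_i|)` for a length-`i` multi signature `s`. -/
def minAct (n : ℕ → ℕ) (i : ℕ) (s : ∀ l : Fin i, Fin (n (l.val + 1)) → Bool) : ℕ :=
  Finset.univ.fold min (n 0) (fun l : Fin i => cnt (s l))


/-- Tail sum `∑_{j ≥ J} v j` of a histogram. -/
noncomputable def tailSum (v : ℕ → ℕ) (J : ℕ) : ℕ :=
  ∑' j : ℕ, if J ≤ j then v j else 0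

/-- The partial order `≼` on histograms: `v ≼ w` iff all tail sums of `v` are dominated by
those of `w`. -/
def hle (v w : ℕ → ℕ) : Prop := ∀ J : ℕ, tailSum v J ≤ tailSum w J

/-- The histogram `e_i` with a single entry `1` at index `i`. -/
def histE (i : ℕ) : ℕ → ℕ := fun j => if j = i then 1 else 0

/-- The activation histogram `ℋ_{n'}(𝒮)`: entry `j` counts the signatures `s ∈ 𝒮` with
`|s| = j` active units. -/
noncomputable def actHist (n' : ℕ) (S : Set (Fin n' → Bool)) : ℕ → ℕ :=
  fun j => {s ∈ S | cnt s = j}.ncard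

/-- The clipping function `cl_k`: all mass at indices `≥ k` is moved to index `k`. -/
noncomputable def clip (k : ℕ) (v : ℕ → ℕ) : ℕ → ℕ :=
  fun i => if i < k then v i else if i = k then tailSum v k else 0

/-- The bound condition for a collection `γ` (accessed as `γ n' n` for `n ≤ n'`, `n' ≥ 1`):
every `γ n' n` is a histogram in `V` (finitely supported); for every ReLU layer function
`h ∈ RL(n, n')` with `0 ≤ n ≤ n'` the activation histogram of its attained signatures is
dominated by `γ n' n` (for `n = 0` the layer functions are the constants, with activation
histogram `e_0`); and `γ n' n ≼ γ n' m` whenever `n ≤ m ≤ n'`. -/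
def BoundCondition (γ : ℕ → ℕ → ℕ → ℕ) : Prop :=
  (∀ n' n : ℕ, 0 < n' → n ≤ n' → (Function.support (γ n' n)).Finite) ∧
  (∀ n' : ℕ, 0 < n' → hle (histE 0) (γ n' 0)) ∧
  (∀ n n' : ℕ, 0 < n → 0 < n' → n ≤ n' →
    ∀ (W : Matrix (Fin n') (Fin n) ℝ) (b : Fin n' → ℝ),
      hle (actHist n' (Set.range (sig W b))) (γ n' n)) ∧
  (∀ n' n m : ℕ, 0 < n' → n ≤ m → m ≤ n' → hle (γ n' n) (γ n' m))

/-- The transition function `φ^{(γ)}_{n'} : V → V`,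
`v ↦ ∑_{m} v_m · cl_{min(m,n')}(γ_{min(m,n'), n'})`. -/
noncomputable def phi (γ : ℕ → ℕ → ℕ → ℕ) (n' : ℕ) (v : ℕ → ℕ) : ℕ → ℕ :=
  fun i => ∑' m : ℕ, v m * clip (min m n') (γ n' (min m n')) i

/-- The dimension histogram `H̃^{(i)}(U)`: entry `j` counts the length-`i` multi signatures
`(s_1, …, s_i) ∈ U` with `min(n_0, |s_1|, …, |s_i|) = j`. -/
noncomputable def dimHist (n : ℕ → ℕ) (i : ℕ)
    (U : Set (∀ l : Fin i, Fin (n (l.val + 1)) → Bool)) : ℕ → ℕ :=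
  fun j => {u ∈ U | minAct n i u = j}.ncard


/-- The bound matrix `B^{(γ)}_{n'} ∈ ℕ^{(n'+1)×(n'+1)}` (as a real matrix), with
(0-indexed) entries `(B^{(γ)}_{n'})_{i,j} = (cl_j(γ_{j,n'}))_i`. -/
noncomputable def boundMatrix (γ : ℕ → ℕ → ℕ → ℕ) (n' : ℕ) :
    Matrix (Fin (n' + 1)) (Fin (n' + 1)) ℝ :=
  fun i j => (clip j.val (γ n' j.val) i.val : ℕ)

/-- The connector matrix `M_{m,m'} ∈ ℝ^{(m'+1)×(m+1)}`, with (0-indexed) entries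
`(M_{m,m'})_{i,j} = 1` if `i = min(j, m')` and `0` otherwise. -/
def connMatrix (m m' : ℕ) : Matrix (Fin (m' + 1)) (Fin (m + 1)) ℝ :=
  fun i j => if i.val = min j.val m' then 1 else 0

/-- The iterated matrix-vector product
`vecIter γ n l = B^{(γ)}_{n_l} M_{n_{l-1},n_l} ⋯ B^{(γ)}_{n_1} M_{n_0,n_1} e_{n_0+1}`,
starting from the standard unit vector `e_{n_0+1} ∈ ℝ^{n_0+1}` (1 in its last entry). -/
noncomputable def vecIter (γ : ℕ → ℕ → ℕ → ℕ) (n : ℕ → ℕ) :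
    (l : ℕ) → Fin (n l + 1) → ℝ
  | 0 => fun i => if i.val = n 0 then 1 else 0
  | l + 1 => boundMatrix γ (n (l + 1)) *ᵥ (connMatrix (n l) (n (l + 1)) *ᵥ vecIter γ n l)

/-! ### Auxiliary lemmas for `stmt15` -/

open scoped Classical

section Stmt15Aux

lemma cnt_le {k : ℕ} (s : Fin k → Bool) : cnt s ≤ k := by
  classical
  have := Finset.card_filter_le (Finset.univ : Finset (Fin k)) (fun j => s j = true)
  simpa [cnt] using this

lemma tailSum_eq_sum {v : ℕ → ℕ} {N : ℕ} (hN : ∀ j, N ≤ j → v j = 0) (J : ℕ) :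
    tailSum v J = ∑ j ∈ Finset.range N, if J ≤ j then v j else 0 := by
  unfold tailSum
  apply tsum_eq_sum
  intro j hj
  simp only [Finset.mem_range, not_lt] at hj
  simp [hN j hj]

lemma exists_bound {v : ℕ → ℕ} (hv : (Function.support v).Finite) :
    ∃ N, ∀ j, N ≤ j → v j = 0 := by
  refine ⟨hv.toFinset.sup id + 1, fun j hj => ?_⟩
  by_contra h
  have hmem : j ∈ hv.toFinset := by
    simp only [Set.Finite.mem_toFinset, Function.mem_support]
    exact h
  have := Finset.le_sup (f := id) hmem
  simp only [id] at this
  omega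

lemma tailSum_split {v : ℕ → ℕ} (hv : (Function.support v).Finite) {J k : ℕ} (hJk : J ≤ k) :
    tailSum v J = (∑ m ∈ Finset.Ico J k, v m) + tailSum v k := by
  obtain ⟨N, hN⟩ := exists_bound hv
  have hN' : ∀ j, max N k ≤ j → v j = 0 := fun j hj => hN j (le_trans (le_max_left _ _) hj)
  rw [tailSum_eq_sum hN' J, tailSum_eq_sum hN' k]
  have hsub : Finset.Ico J k ⊆ Finset.range (max N k) := by
    intro m hm
    simp only [Finset.mem_Ico, Finset.mem_range] at *
    omega
  have hterm : ∀ m ∈ Finset.range (max N k),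
      (if J ≤ m then v m else 0)
        = (if m ∈ Finset.Ico J k then v m else 0) + (if k ≤ m then v m else 0) := by
    intro m _
    by_cases h1 : J ≤ m
    · by_cases h2 : m < k
      · rw [if_pos h1, if_pos (Finset.mem_Ico.mpr ⟨h1, h2⟩), if_neg (by omega)]
        simp
      · have hm1 : m ∉ Finset.Ico J k := by simp only [Finset.mem_Ico]; omega
        rw [if_pos h1, if_neg hm1, if_pos (by omega)]
        simp
    · have hm1 : m ∉ Finset.Ico J k := by simp only [Finset.mem_Ico]; omega
      rw [if_neg h1, if_neg hm1, if_neg (by omega)]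
  rw [Finset.sum_congr rfl hterm, Finset.sum_add_distrib, Finset.sum_ite_mem,
    Finset.inter_eq_right.mpr hsub]

lemma tailSum_histE_zero : tailSum (histE 0) 0 = 1 := by
  have hN : ∀ j, 1 ≤ j → histE 0 j = 0 := by
    intro j hj
    simp only [histE]
    rw [if_neg (by omega)]
  rw [tailSum_eq_sum hN 0]
  simp [histE]

lemma card_filter_ge_eq_sum {α : Type*} (A : Finset α) (m : α → ℕ) (N J : ℕ)
    (hm : ∀ a ∈ A, m a ≤ N) :
    (A.filter (fun a => J ≤ m a)).card
      = ∑ j ∈ Finset.range (N + 1), if J ≤ j then (A.filter (fun a => m a = j)).card else 0 := by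
  classical
  rw [Finset.card_eq_sum_card_fiberwise (f := m) (t := Finset.range (N + 1))
    (fun a ha => Finset.mem_range.mpr (Nat.lt_succ_of_le (hm a (Finset.mem_filter.mp ha).1)))]
  refine Finset.sum_congr rfl fun j _ => ?_
  by_cases hJ : J ≤ j
  · rw [if_pos hJ]
    congr 1
    rw [Finset.filter_filter]
    refine Finset.filter_congr fun a _ => ?_
    constructor
    · rintro ⟨_, h2⟩; exact h2
    · rintro h2; exact ⟨h2 ▸ hJ, h2⟩
  · rw [if_neg hJ]
    rw [Finset.card_eq_zero, Finset.filter_filter]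
    rw [Finset.filter_eq_empty_iff]
    rintro a _ ⟨h1, h2⟩
    exact hJ (h2 ▸ h1)

lemma tailSum_actHist {np : ℕ} (S : Set (Fin np → Bool)) (J : ℕ) :
    tailSum (actHist np S) J
      = (((Set.toFinite S).toFinset).filter (fun s => J ≤ cnt s)).card := by
  classical
  have hsupp : ∀ j, np + 1 ≤ j → actHist np S j = 0 := by
    intro j hj
    have he : {s ∈ S | cnt s = j} = ∅ := by
      ext s
      simp only [Set.mem_setOf_eq, Set.mem_empty_iff_false, iff_false, not_and]
      intro _
      have := cnt_le s
      omega
    simp [actHist, he]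
  rw [tailSum_eq_sum hsupp J,
    card_filter_ge_eq_sum _ cnt np J (fun s _ => cnt_le s)]
  refine Finset.sum_congr rfl fun j _ => ?_
  by_cases hJ : J ≤ j
  · rw [if_pos hJ, if_pos hJ]
    show actHist np S j = _
    rw [actHist, Set.ncard_eq_toFinset_card _ (Set.toFinite _)]
    congr 1
    ext s
    simp only [Set.Finite.mem_toFinset, Set.mem_setOf_eq, Finset.mem_filter]
  · rw [if_neg hJ, if_neg hJ]

lemma clip_tail_sum {v : ℕ → ℕ} (hv : (Function.support v).Finite) {np k : ℕ} (J : ℕ)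
    (hk : k ≤ np) :
    (∑ m ∈ Finset.range (np + 1), if J ≤ m then clip k v m else 0)
      = if J ≤ k then tailSum v J else 0 := by
  by_cases hJ : J ≤ k
  · rw [if_pos hJ, tailSum_split hv hJ]
    have hterm : ∀ m ∈ Finset.range (np + 1),
        (if J ≤ m then clip k v m else 0)
          = (if m ∈ Finset.Ico J k then v m else 0) + (if m = k then tailSum v k else 0) := by
      intro m _
      rcases lt_trichotomy m k with h | h | h
      · by_cases hJm : J ≤ m
        · rw [if_pos hJm, if_pos (Finset.mem_Ico.mpr ⟨hJm, h⟩), if_neg (by omega)]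
          simp [clip, h]
        · have hm1 : m ∉ Finset.Ico J k := by simp only [Finset.mem_Ico]; omega
          rw [if_neg hJm, if_neg hm1, if_neg (by omega)]
      · subst h
        have hm1 : m ∉ Finset.Ico J m := by simp only [Finset.mem_Ico]; omega
        have hcl : clip m v m = tailSum v m := by simp [clip]
        rw [if_pos hJ, hcl, if_neg hm1, if_pos rfl]
        simp
      · have hc : clip k v m = 0 := by
          simp only [clip]
          rw [if_neg (by omega), if_neg (by omega)]
        have hm1 : m ∉ Finset.Ico J k := by simp only [Finset.mem_Ico]; omega
        rw [if_pos (by omega : J ≤ m), hc, if_neg hm1, if_neg (by omega)]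
    rw [Finset.sum_congr rfl hterm, Finset.sum_add_distrib, Finset.sum_ite_mem,
      Finset.inter_eq_right.mpr (by intro m hm; simp only [Finset.mem_Ico, Finset.mem_range] at *; omega),
      Finset.sum_ite_eq' (Finset.range (np + 1)) k (fun _ => tailSum v k),
      if_pos (Finset.mem_range.mpr (by omega))]
  · rw [if_neg hJ]
    apply Finset.sum_eq_zero
    intro m _
    by_cases hJm : J ≤ m
    · rw [if_pos hJm]
      simp only [clip]
      rw [if_neg (by omega), if_neg (by omega)]
    · rw [if_neg hJm]

lemma abel_sum (N : ℕ) (d v g : ℕ → ℝ) (hg0 : 0 ≤ g 0) (hg : Monotone g)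
    (hT : ∀ J, (∑ m ∈ Finset.range (N + 1), if J ≤ m then d m else 0)
        ≤ ∑ m ∈ Finset.range (N + 1), if J ≤ m then v m else 0) :
    (∑ m ∈ Finset.range (N + 1), d m * g m) ≤ ∑ m ∈ Finset.range (N + 1), v m * g m := by
  set c : ℕ → ℝ := fun J => if J = 0 then g 0 else g J - g (J - 1) with hc
  have htel : ∀ m : ℕ, (∑ J ∈ Finset.range (m + 1), c J) = g m := by
    intro m
    induction m with
    | zero => simp [hc]
    | succ k ih =>
      have hck : c (k + 1) = g (k + 1) - g k := by simp [hc]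
      rw [Finset.sum_range_succ, ih, hck]
      ring
  have hkey : ∀ w : ℕ → ℝ, (∑ m ∈ Finset.range (N + 1), w m * g m)
      = ∑ J ∈ Finset.range (N + 1), c J *
          ∑ m ∈ Finset.range (N + 1), if J ≤ m then w m else 0 := by
    intro w
    have h1 : (∑ J ∈ Finset.range (N + 1), c J *
          ∑ m ∈ Finset.range (N + 1), if J ≤ m then w m else 0)
        = ∑ J ∈ Finset.range (N + 1), ∑ m ∈ Finset.range (N + 1),
            (if J ≤ m then c J else 0) * w m := by
      refine Finset.sum_congr rfl fun J _ => ?_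
      rw [Finset.mul_sum]
      refine Finset.sum_congr rfl fun m _ => ?_
      split_ifs <;> simp
    rw [h1, Finset.sum_comm]
    refine Finset.sum_congr rfl fun m hm => ?_
    rw [← Finset.sum_mul]
    have hmN := Finset.mem_range.mp hm
    have hsub : Finset.range (m + 1) ⊆ Finset.range (N + 1) :=
      Finset.range_subset_range.mpr (by omega)
    have h2 : (∑ J ∈ Finset.range (N + 1), if J ≤ m then c J else 0)
        = ∑ J ∈ Finset.range (m + 1), c J := by
      rw [← Finset.sum_subset hsub (fun x _ hx => if_neg (by
        simp only [Finset.mem_range] at hx; omega))]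
      exact Finset.sum_congr rfl fun J hJ => if_pos (by
        have := Finset.mem_range.mp hJ; omega)
    rw [h2, htel]
    ring
  rw [hkey d, hkey v]
  apply Finset.sum_le_sum
  intro J _
  have hcJ : 0 ≤ c J := by
    by_cases h : J = 0
    · simpa [hc, h] using hg0
    · simp only [hc, if_neg h, sub_nonneg]
      exact hg (by omega)
  exact mul_le_mul_of_nonneg_left (hT J) hcJ

lemma matrix_factor {n0 np k : ℕ} (A : Matrix (Fin np) (Fin n0) ℝ) (hA : A.rank ≤ k) :
    ∃ (B : Matrix (Fin np) (Fin k) ℝ) (Q : Matrix (Fin k) (Fin n0) ℝ),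
      ∀ x, A *ᵥ x = B *ᵥ (Q *ᵥ x) := by
  classical
  set R := LinearMap.range A.mulVecLin with hR
  set ρ := Module.finrank ℝ R with hρdef
  have hρ : ρ ≤ k := hA
  let bb : Module.Basis (Fin ρ) ℝ R := Module.finBasis ℝ R
  let h2 : R →ₗ[ℝ] (Fin ρ → ℝ) := bb.equivFun.toLinearMap
  let h : (Fin n0 → ℝ) →ₗ[ℝ] (Fin k → ℝ) :=
    LinearMap.pi (fun i : Fin k =>
      if hi : i.val < ρ then (LinearMap.proj (⟨i.val, hi⟩ : Fin ρ)).comp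
        (h2.comp A.mulVecLin.rangeRestrict) else 0)
  let g : (Fin k → ℝ) →ₗ[ℝ] (Fin np → ℝ) :=
    ∑ i : Fin k, (LinearMap.proj i).smulRight
      (if hi : i.val < ρ then ((bb ⟨i.val, hi⟩ : R) : Fin np → ℝ) else 0)
  refine ⟨LinearMap.toMatrix' g, LinearMap.toMatrix' h, fun x => ?_⟩
  have hgm : ∀ y, (LinearMap.toMatrix' g) *ᵥ y = g y := fun y => by
    rw [← Matrix.toLin'_apply, Matrix.toLin'_toMatrix']
  have hhm : (LinearMap.toMatrix' h) *ᵥ x = h x := by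
    rw [← Matrix.toLin'_apply, Matrix.toLin'_toMatrix']
  rw [hhm, hgm]
  have hgh : g (h x) = ∑ i : Fin k,
      (if hi : i.val < ρ then
        (bb.equivFun (A.mulVecLin.rangeRestrict x) ⟨i.val, hi⟩ •
          ((bb ⟨i.val, hi⟩ : R) : Fin np → ℝ)) else 0) := by
    rw [LinearMap.sum_apply]
    refine Finset.sum_congr rfl fun i _ => ?_
    rw [LinearMap.smulRight_apply, LinearMap.proj_apply]
    have hhx : h x i = if hi : i.val < ρ then
        bb.equivFun (A.mulVecLin.rangeRestrict x) ⟨i.val, hi⟩ else 0 := by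
      show (LinearMap.pi _) x i = _
      rw [LinearMap.pi_apply]
      by_cases hi : i.val < ρ
      · rw [dif_pos hi, dif_pos hi]
        rfl
      · rw [dif_neg hi, dif_neg hi]
        rfl
    rw [hhx]
    by_cases hi : i.val < ρ
    · rw [dif_pos hi, dif_pos hi, dif_pos hi]
    · rw [dif_neg hi, dif_neg hi, dif_neg hi]
      simp
  rw [hgh]
  have hre : (∑ i : Fin k,
      (if hi : i.val < ρ then
        (bb.equivFun (A.mulVecLin.rangeRestrict x) ⟨i.val, hi⟩ •
          ((bb ⟨i.val, hi⟩ : R) : Fin np → ℝ)) else 0))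
      = ∑ j : Fin ρ, bb.equivFun (A.mulVecLin.rangeRestrict x) j •
          ((bb j : R) : Fin np → ℝ) := by
    rw [← Finset.sum_subset (Finset.subset_univ ((Finset.univ : Finset (Fin ρ)).map
      (Fin.castLEEmb hρ))) (fun i _ hi => ?_)]
    · rw [Finset.sum_map]
      refine Finset.sum_congr rfl fun j _ => ?_
      have hj : ((Fin.castLEEmb hρ) j).val < ρ := by
        simp [Fin.castLEEmb]
      rw [dif_pos hj]
      have hje : (⟨((Fin.castLEEmb hρ) j).val, hj⟩ : Fin ρ) = j := by
        apply Fin.ext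
        simp [Fin.castLEEmb]
      rw [hje]
    · have hi' : ¬ i.val < ρ := by
        intro hc
        exact hi (Finset.mem_map.mpr ⟨⟨i.val, hc⟩, Finset.mem_univ _, by
          simp [Fin.castLEEmb, Fin.ext_iff]⟩)
      rw [dif_neg hi']
  rw [hre]
  have hsum : (∑ j : Fin ρ, bb.equivFun (A.mulVecLin.rangeRestrict x) j •
      ((bb j : R) : Fin np → ℝ))
      = ((A.mulVecLin.rangeRestrict x : R) : Fin np → ℝ) := by
    have := bb.sum_equivFun (A.mulVecLin.rangeRestrict x)
    calc (∑ j : Fin ρ, bb.equivFun (A.mulVecLin.rangeRestrict x) j •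
        ((bb j : R) : Fin np → ℝ))
        = ((∑ j : Fin ρ, bb.equivFun (A.mulVecLin.rangeRestrict x) j • bb j : R) : Fin np → ℝ) := by
          push_cast
          rfl
      _ = _ := by rw [this]
  rw [hsum]
  show A *ᵥ x = ↑(A.mulVecLin.rangeRestrict x)
  rw [LinearMap.codRestrict_apply]
  rw [Matrix.mulVecLin_apply]

lemma rank_boolDiag {np : ℕ} (s : Fin np → Bool) :
    (Matrix.diagonal (fun i => if s i then (1:ℝ) else 0)).rank = cnt s := by
  classical
  rw [Matrix.rank_diagonal]
  have h1 : cnt s = Fintype.card {i // s i = true} := (Fintype.card_subtype _).symm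
  rw [h1]
  apply Fintype.card_congr
  apply Equiv.subtypeEquivRight
  intro i
  by_cases h : s i <;> simp [h]

lemma minAct_succ (n : ℕ → ℕ) (l : ℕ) (u : ∀ l' : Fin (l + 1), Fin (n (l'.val + 1)) → Bool) :
    minAct n (l + 1) u
      = min (cnt (u (Fin.last l))) (minAct n l (fun l' => u l'.castSucc)) := by
  rw [minAct, Fin.univ_castSuccEmb, Finset.fold_cons, Finset.fold_map]
  rfl

lemma minAct_zero (n : ℕ → ℕ) (u : ∀ l' : Fin 0, Fin (n (l'.val + 1)) → Bool) :
    minAct n 0 u = n 0 := by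
  simp [minAct]

lemma minAct_le (n : ℕ → ℕ) (l : ℕ) (u : ∀ l' : Fin l, Fin (n (l'.val + 1)) → Bool) :
    minAct n l u ≤ n l := by
  cases l with
  | zero => rw [minAct_zero]
  | succ k =>
    rw [minAct_succ]
    exact le_trans (min_le_left _ _) (cnt_le _)

lemma fwd_affine (n : ℕ → ℕ) (W : ∀ l : ℕ, Matrix (Fin (n (l + 1))) (Fin (n l)) ℝ)
    (b : ∀ l : ℕ, Fin (n (l + 1)) → ℝ) :
    ∀ (l : ℕ) (u : ∀ l' : Fin l, Fin (n (l'.val + 1)) → Bool),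
      ∃ (M : Matrix (Fin (n l)) (Fin (n 0)) ℝ) (c : Fin (n l) → ℝ),
        M.rank ≤ minAct n l u ∧
        ∀ x, msig n W b l x = u → fwd n W b l x = M *ᵥ x + c := by
  intro l
  induction l with
  | zero =>
    intro u
    refine ⟨1, 0, ?_, fun x _ => by simp [fwd]⟩
    rw [minAct_zero]
    simpa using (Matrix.rank_le_card_width (1 : Matrix (Fin (n 0)) (Fin (n 0)) ℝ))
  | succ l ih =>
    intro u
    obtain ⟨M, c, hrank, hval⟩ := ih (fun l' => u l'.castSucc)
    set s : Fin (n (l + 1)) → Bool := u (Fin.last l) with hs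
    set D : Matrix (Fin (n (l + 1))) (Fin (n (l + 1))) ℝ :=
      Matrix.diagonal (fun i => if s i then (1:ℝ) else 0) with hD
    refine ⟨D * (W l * M), D *ᵥ (W l *ᵥ c + b l), ?_, ?_⟩
    · rw [minAct_succ]
      refine le_min ?_ ?_
      · calc (D * (W l * M)).rank ≤ D.rank := Matrix.rank_mul_le_left _ _
          _ = cnt s := rank_boolDiag s
      · calc (D * (W l * M)).rank ≤ (W l * M).rank := Matrix.rank_mul_le_right _ _
          _ ≤ M.rank := Matrix.rank_mul_le_right _ _
          _ ≤ _ := hrank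
    · intro x hx
      have hpre : msig n W b l x = fun l' : Fin l => u l'.castSucc := by
        funext l'
        exact congrFun hx (Fin.castSucc l')
      have hfwd := hval x hpre
      have hsig : sig (W l) (b l) (fwd n W b l x) = s := congrFun hx (Fin.last l)
      funext i
      have hd : ∀ y : Fin (n (l + 1)) → ℝ, (D *ᵥ y) i = (if s i then (1:ℝ) else 0) * y i :=
        fun y => Matrix.mulVec_diagonal _ _ _
      have hrow : ((D * (W l * M)) *ᵥ x) i
          = (if s i then (1:ℝ) else 0) * (((W l * M)) *ᵥ x) i := by
        rw [← Matrix.mulVec_mulVec]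
        exact hd _
      have hWM : ((W l * M) *ᵥ x) i = W l i ⬝ᵥ (M *ᵥ x) := by
        rw [← Matrix.mulVec_mulVec]
        rfl
      have hlhs : fwd n W b (l + 1) x i = max 0 (W l i ⬝ᵥ fwd n W b l x + b l i) := rfl
      have hsigi := congrFun hsig i
      rw [hlhs, Pi.add_apply, hrow, hd, hWM]
      rw [hfwd] at hsigi ⊢
      rw [dotProduct_add]
      have hWc : (W l *ᵥ c + b l) i = W l i ⬝ᵥ c + b l i := rfl
      rw [hWc]
      by_cases hsi : s i
      · rw [hsi] at hsigi ⊢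
        have hpos : 0 < W l i ⬝ᵥ (M *ᵥ x) + W l i ⬝ᵥ c + b l i := by
          simpa [sig, dotProduct_add] using hsigi
        rw [if_pos rfl]
        rw [max_eq_right (by linarith)]
        ring
      · rw [Bool.not_eq_true] at hsi
        rw [hsi] at hsigi ⊢
        have hnpos : W l i ⬝ᵥ (M *ᵥ x) + W l i ⬝ᵥ c + b l i ≤ 0 := by
          simpa [sig, dotProduct_add] using hsigi
        rw [if_neg (by simp)]
        rw [max_eq_left (by linarith)]
        ring

lemma ext_sig_range (n : ℕ → ℕ) (W : ∀ l : ℕ, Matrix (Fin (n (l + 1))) (Fin (n l)) ℝ)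
    (b : ∀ l : ℕ, Fin (n (l + 1)) → ℝ) (l : ℕ)
    (u : ∀ l' : Fin l, Fin (n (l'.val + 1)) → Bool) :
    ∃ (B : Matrix (Fin (n (l + 1))) (Fin (min (minAct n l u) (n (l + 1)))) ℝ)
      (β : Fin (n (l + 1)) → ℝ),
      ∀ x, msig n W b l x = u →
        sig (W l) (b l) (fwd n W b l x) ∈ Set.range (sig B β) := by
  obtain ⟨M, c, hrank, hval⟩ := fwd_affine n W b l u
  set A := W l * M with hA
  have hAr : A.rank ≤ min (minAct n l u) (n (l + 1)) := by
    refine le_min ((Matrix.rank_mul_le_right _ _).trans hrank) ?_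
    simpa using Matrix.rank_le_card_height A
  obtain ⟨B, Q, hBQ⟩ := matrix_factor A hAr
  refine ⟨B, fun i => W l i ⬝ᵥ c + b l i, fun x hx => ⟨Q *ᵥ x, ?_⟩⟩
  funext i
  show decide (0 < B i ⬝ᵥ (Q *ᵥ x) + (W l i ⬝ᵥ c + b l i))
      = decide (0 < W l i ⬝ᵥ fwd n W b l x + b l i)
  congr 1
  rw [hval x hx, dotProduct_add]
  have h1 : B i ⬝ᵥ (Q *ᵥ x) = A i ⬝ᵥ x := (congrFun (hBQ x) i).symm
  have h2 : A i ⬝ᵥ x = W l i ⬝ᵥ (M *ᵥ x) := by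
    have := congrFun (Matrix.mulVec_mulVec x (W l) M) i
    exact this.symm
  rw [h1, h2]
  ring

end Stmt15Aux
/-- Let `γ ∈ Γ` satisfy the bound condition. In the multilayer setting with widths
`n 0, …, n L`, the number of attained multi signatures satisfies
`|𝒮_h| ≤ ‖B^{(γ)}_{n_L} M_{n_{L-1},n_L} ⋯ B^{(γ)}_{n_1} M_{n_0,n_1} e_{n_0+1}‖₁`. -/
theorem stmt15 (γ : ℕ → ℕ → ℕ → ℕ) (hγ : BoundCondition γ)
    (L : ℕ) (hL : 0 < L) (n : ℕ → ℕ) (hn : ∀ l, 0 < n l)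
    (W : ∀ l : ℕ, Matrix (Fin (n (l + 1))) (Fin (n l)) ℝ)
    (b : ∀ l : ℕ, Fin (n (l + 1)) → ℝ) :
    ((Set.range (msig n W b L)).ncard : ℝ) ≤ ∑ i, |vecIter γ n L i| := by
  classical
  have key : ∀ (l : ℕ) (J : ℕ),
      (((Finset.univ.filter (fun w : (∀ l' : Fin l, Fin (n (l'.val + 1)) → Bool) =>
          w ∈ Set.range (msig n W b l) ∧ J ≤ minAct n l w)).card : ℝ))
        ≤ ∑ i : Fin (n l + 1), if J ≤ i.val then vecIter γ n l i else 0 := by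
    intro l
    induction l with
    | zero =>
      intro J
      have hmem : ∀ w : (∀ l' : Fin 0, Fin (n (l'.val + 1)) → Bool),
          w ∈ Set.range (msig n W b 0) := fun w => ⟨fun _ => 0, Subsingleton.elim _ _⟩
      by_cases h : J ≤ n 0
      · have hset : (Finset.univ.filter (fun w : (∀ l' : Fin 0, Fin (n (l'.val + 1)) → Bool) =>
            w ∈ Set.range (msig n W b 0) ∧ J ≤ minAct n 0 w)) = Finset.univ := by
          apply Finset.filter_true_of_mem
          intro w _
          exact ⟨hmem w, by rw [minAct_zero]; exact h⟩
        rw [hset, Finset.card_univ]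
        have hcard : Fintype.card (∀ l' : Fin 0, Fin (n (l'.val + 1)) → Bool) = 1 := by
          simp
        rw [hcard]
        have hterm : ∀ i : Fin (n 0 + 1),
            (if J ≤ i.val then vecIter γ n 0 i else 0)
              = if i = Fin.last (n 0) then (1 : ℝ) else 0 := by
          intro i
          show (if J ≤ i.val then (if i.val = n 0 then (1:ℝ) else 0) else 0) = _
          by_cases hi : i = Fin.last (n 0)
          · subst hi
            simp [Fin.val_last, h]
          · have hi' : i.val ≠ n 0 := fun hc => hi (by apply Fin.ext; simpa using hc)
            simp [hi', hi]
        rw [Finset.sum_congr rfl (fun i _ => hterm i),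
          Finset.sum_ite_eq' Finset.univ (Fin.last (n 0)) (fun _ => (1:ℝ))]
        simp
      · have hset : (Finset.univ.filter (fun w : (∀ l' : Fin 0, Fin (n (l'.val + 1)) → Bool) =>
            w ∈ Set.range (msig n W b 0) ∧ J ≤ minAct n 0 w)) = ∅ := by
          rw [Finset.filter_eq_empty_iff]
          intro w _
          rw [minAct_zero]
          exact fun hc => h hc.2
        rw [hset]
        have hz : (∑ i : Fin (n 0 + 1), if J ≤ i.val then vecIter γ n 0 i else 0) = 0 := by
          apply Finset.sum_eq_zero
          intro i _
          have := i.isLt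
          rw [if_neg (by omega)]
        rw [hz]
        simp
    | succ l ih =>
      intro J
      set Ul : Finset (∀ l' : Fin l, Fin (n (l'.val + 1)) → Bool) :=
        Finset.univ.filter (fun w => w ∈ Set.range (msig n W b l)) with hUl
      set A1 : Finset (∀ l' : Fin (l + 1), Fin (n (l'.val + 1)) → Bool) :=
        Finset.univ.filter (fun w =>
          w ∈ Set.range (msig n W b (l + 1)) ∧ J ≤ minAct n (l + 1) w) with hA1
      set E : (∀ l' : Fin l, Fin (n (l'.val + 1)) → Bool) → Finset (Fin (n (l + 1)) → Bool) :=
        fun u => Finset.univ.filter (fun s =>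
          (∃ x, msig n W b l x = u ∧ sig (W l) (b l) (fwd n W b l x) = s) ∧
          J ≤ min (minAct n l u) (cnt s)) with hE
      have hmapsto : ∀ w ∈ A1, (fun l' : Fin l => w (Fin.castSucc l')) ∈ Ul := by
        intro w hw
        rw [hA1, Finset.mem_filter] at hw
        obtain ⟨-, ⟨x, hx⟩, -⟩ := hw
        rw [hUl, Finset.mem_filter]
        exact ⟨Finset.mem_univ _, ⟨x, funext fun l' => congrFun hx (Fin.castSucc l')⟩⟩
      have hdecomp : A1.card = ∑ u ∈ Ul,
          (A1.filter (fun w => (fun l' : Fin l => w (Fin.castSucc l')) = u)).card :=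
        Finset.card_eq_sum_card_fiberwise hmapsto
      have hfiber : ∀ u ∈ Ul,
          (A1.filter (fun w => (fun l' : Fin l => w (Fin.castSucc l')) = u)).card
            ≤ (E u).card := by
        intro u _
        apply Finset.card_le_card_of_injOn (fun w => w (Fin.last l))
        · intro w hw
          rw [Finset.mem_coe, Finset.mem_filter] at hw
          obtain ⟨hw1, hw2⟩ := hw
          rw [hA1, Finset.mem_filter] at hw1
          obtain ⟨-, ⟨x, hx⟩, hminw⟩ := hw1
          rw [hE, Finset.mem_coe, Finset.mem_filter]
          refine ⟨Finset.mem_univ _, ⟨x, ?_, ?_⟩, ?_⟩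
          · rw [← hw2]
            funext l'
            exact congrFun hx (Fin.castSucc l')
          · exact congrFun hx (Fin.last l)
          · rw [minAct_succ n l w] at hminw
            rw [hw2] at hminw
            exact le_min (le_trans hminw (min_le_right _ _))
              (le_trans hminw (min_le_left _ _))
        · intro w1 h1 w2 h2 heq
          have h1' := Finset.mem_coe.mp h1
          have h2' := Finset.mem_coe.mp h2
          rw [Finset.mem_filter] at h1' h2'
          funext l''
          refine Fin.lastCases ?_ ?_ l''
          · exact heq
          · intro l'
            exact (congrFun h1'.2 l').trans (congrFun h2'.2 l').symm
      have hEbound : ∀ u : (∀ l' : Fin l, Fin (n (l'.val + 1)) → Bool),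
          (E u).card ≤ (if J ≤ min (minAct n l u) (n (l + 1)) then
            tailSum (γ (n (l + 1)) (min (minAct n l u) (n (l + 1)))) J else 0) := by
        intro u
        by_cases hJk : J ≤ min (minAct n l u) (n (l + 1))
        · rw [if_pos hJk]
          obtain ⟨B, β, hB⟩ := ext_sig_range n W b l u
          have hsub : E u ⊆ (Set.toFinite (Set.range (sig B β))).toFinset.filter
              (fun s => J ≤ cnt s) := by
            intro s hs
            rw [hE, Finset.mem_filter] at hs
            obtain ⟨-, ⟨x, hx, hsx⟩, hmin⟩ := hs
            rw [Finset.mem_filter, Set.Finite.mem_toFinset]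
            exact ⟨hsx ▸ hB x hx, le_trans hmin (min_le_right _ _)⟩
          refine le_trans (Finset.card_le_card hsub) ?_
          rw [← tailSum_actHist]
          by_cases hk : 0 < min (minAct n l u) (n (l + 1))
          · exact hγ.2.2.1 _ _ hk (hn (l + 1)) (min_le_right _ _) B β J
          · have hk0 : min (minAct n l u) (n (l + 1)) = 0 := Nat.eq_zero_of_not_pos hk
            have hJ0 : J = 0 := Nat.le_zero.mp (le_trans hJk (le_of_eq hk0))
            subst hJ0
            rw [show tailSum (γ (n (l + 1)) (min (minAct n l u) (n (l + 1)))) 0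
              = tailSum (γ (n (l + 1)) 0) 0 from by rw [hk0]]
            have hSsub : Set.range (sig B β) ⊆ {sig B β (fun _ => 0)} := by
              rintro s ⟨t, rfl⟩
              have ht : t = (fun _ => 0) := by
                funext j
                exact ((hk0 ▸ j) : Fin 0).elim0
              rw [ht]
              rfl
            calc tailSum (actHist (n (l + 1)) (Set.range (sig B β))) 0
                = (((Set.toFinite (Set.range (sig B β))).toFinset).filter
                    (fun s => 0 ≤ cnt s)).card := tailSum_actHist _ 0
              _ ≤ ({sig B β (fun _ => 0)} : Finset _).card := by
                  apply Finset.card_le_card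
                  intro s hs
                  rw [Finset.mem_filter, Set.Finite.mem_toFinset] at hs
                  exact Finset.mem_singleton.mpr (hSsub hs.1)
              _ = 1 := Finset.card_singleton _
              _ = tailSum (histE 0) 0 := tailSum_histE_zero.symm
              _ ≤ tailSum (γ (n (l + 1)) 0) 0 := hγ.2.1 (n (l + 1)) (hn (l + 1)) 0
        · rw [if_neg hJk]
          have hempty : E u = ∅ := by
            rw [hE, Finset.filter_eq_empty_iff]
            rintro s - ⟨-, hmin⟩
            apply hJk
            exact le_trans hmin (le_min (min_le_left _ _)
              (le_trans (min_le_right _ _) (cnt_le s)))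
          rw [hempty, Finset.card_empty]
      set g : ℕ → ℝ := fun m => ((if J ≤ min m (n (l + 1)) then
        tailSum (γ (n (l + 1)) (min m (n (l + 1)))) J else 0 : ℕ) : ℝ) with hg
      have hgmono : Monotone g := by
        intro m1 m2 hm
        rw [hg]
        simp only
        by_cases h1 : J ≤ min m1 (n (l + 1))
        · have h2 : J ≤ min m2 (n (l + 1)) := le_trans h1 (min_le_min hm (le_refl _))
          rw [if_pos h1, if_pos h2]
          exact Nat.cast_le.mpr (hγ.2.2.2 (n (l + 1)) _ _ (hn (l + 1))
            (min_le_min hm (le_refl _)) (min_le_right _ _) J)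
        · rw [if_neg h1]
          exact Nat.cast_le.mpr (Nat.zero_le _)
      have hg0 : 0 ≤ g 0 := Nat.cast_nonneg _
      set d : ℕ → ℝ := fun m => ((Ul.filter (fun u => minAct n l u = m)).card : ℝ) with hd
      set v : ℕ → ℝ := fun m =>
        if h : m < n l + 1 then vecIter γ n l ⟨m, h⟩ else 0 with hv
      have hvi : ∀ i : Fin (n l + 1), v i.val = vecIter γ n l i := by
        intro i
        rw [hv]
        simp only
        rw [dif_pos i.isLt]
      have hstep1 : (A1.card : ℝ) ≤ ∑ u ∈ Ul, g (minAct n l u) := by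
        rw [hdecomp]
        push_cast
        apply Finset.sum_le_sum
        intro u hu
        calc ((A1.filter (fun w => (fun l' : Fin l => w (Fin.castSucc l')) = u)).card : ℝ)
            ≤ ((E u).card : ℝ) := Nat.cast_le.mpr (hfiber u hu)
          _ ≤ g (minAct n l u) := Nat.cast_le.mpr (hEbound u)
      have hstep2 : (∑ u ∈ Ul, g (minAct n l u))
          = ∑ m ∈ Finset.range (n l + 1), d m * g m := by
        rw [← Finset.sum_fiberwise_of_maps_to' (g := minAct n l)
          (fun u _ => Finset.mem_range.mpr (Nat.lt_succ_of_le (minAct_le n l u)))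
          (fun m => g m)]
        refine Finset.sum_congr rfl fun m _ => ?_
        rw [Finset.sum_const, nsmul_eq_mul]
      have hT : ∀ J' : ℕ, (∑ m ∈ Finset.range (n l + 1), if J' ≤ m then d m else 0)
          ≤ ∑ m ∈ Finset.range (n l + 1), if J' ≤ m then v m else 0 := by
        intro J'
        have hnat := card_filter_ge_eq_sum Ul (minAct n l) (n l) J'
          (fun u _ => minAct_le n l u)
        have hLHS : (∑ m ∈ Finset.range (n l + 1), if J' ≤ m then d m else 0)
            = ((Ul.filter (fun u => J' ≤ minAct n l u)).card : ℝ) := by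
          rw [hnat, Nat.cast_sum]
          refine Finset.sum_congr rfl fun m _ => ?_
          rw [hd]
          split_ifs with h
          · rfl
          · simp
        have hRHS : (∑ m ∈ Finset.range (n l + 1), if J' ≤ m then v m else 0)
            = ∑ i : Fin (n l + 1), if J' ≤ i.val then vecIter γ n l i else 0 := by
          rw [← Fin.sum_univ_eq_sum_range (fun m => if J' ≤ m then v m else 0) (n l + 1)]
          refine Finset.sum_congr rfl fun i _ => ?_
          split_ifs with h
          · exact hvi i
          · rfl
        rw [hLHS, hRHS, hUl, Finset.filter_filter]
        exact ih J'
      have habel := abel_sum (n l) d v g hg0 hgmono hT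
      have hstep3 : (∑ m ∈ Finset.range (n l + 1), v m * g m)
          = ∑ i : Fin (n (l + 1) + 1), if J ≤ i.val then vecIter γ n (l + 1) i else 0 := by
        set G : ℕ → ℝ := fun k => ((if J ≤ k then tailSum (γ (n (l + 1)) k) J else 0 : ℕ) : ℝ)
          with hG
        have h1 : (∑ i : Fin (n (l + 1) + 1), if J ≤ i.val then vecIter γ n (l + 1) i else 0)
            = ∑ i : Fin (n (l + 1) + 1), ∑ κ : Fin (n (l + 1) + 1),
                (if J ≤ i.val then boundMatrix γ (n (l + 1)) i κ *
                  (connMatrix (n l) (n (l + 1)) *ᵥ vecIter γ n l) κ else 0) := by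
          refine Finset.sum_congr rfl fun i _ => ?_
          split_ifs with h
          · rfl
          · exact Finset.sum_const_zero.symm
        have h2 : ∀ κ : Fin (n (l + 1) + 1), (∑ i : Fin (n (l + 1) + 1),
            if J ≤ i.val then boundMatrix γ (n (l + 1)) i κ *
              (connMatrix (n l) (n (l + 1)) *ᵥ vecIter γ n l) κ else 0)
            = G κ.val * (connMatrix (n l) (n (l + 1)) *ᵥ vecIter γ n l) κ := by
          intro κ
          have hmove : ∀ i : Fin (n (l + 1) + 1),
              (if J ≤ i.val then boundMatrix γ (n (l + 1)) i κ *
                (connMatrix (n l) (n (l + 1)) *ᵥ vecIter γ n l) κ else 0)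
              = (if J ≤ i.val then boundMatrix γ (n (l + 1)) i κ else 0) *
                (connMatrix (n l) (n (l + 1)) *ᵥ vecIter γ n l) κ := by
            intro i
            split_ifs <;> simp
          rw [Finset.sum_congr rfl (fun i _ => hmove i), ← Finset.sum_mul]
          congr 1
          have hκ : κ.val ≤ n (l + 1) := Nat.lt_succ_iff.mp κ.isLt
          have hγfin := hγ.1 (n (l + 1)) κ.val (hn (l + 1)) hκ
          have hnat := clip_tail_sum hγfin J hκ
          calc (∑ i : Fin (n (l + 1) + 1),
              if J ≤ i.val then boundMatrix γ (n (l + 1)) i κ else 0)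
              = ∑ i : Fin (n (l + 1) + 1),
                  if J ≤ i.val then ((clip κ.val (γ (n (l + 1)) κ.val) i.val : ℕ) : ℝ) else 0 :=
                Finset.sum_congr rfl (fun i _ => by split_ifs <;> rfl)
            _ = ∑ m ∈ Finset.range (n (l + 1) + 1),
                  if J ≤ m then ((clip κ.val (γ (n (l + 1)) κ.val) m : ℕ) : ℝ) else 0 :=
                Fin.sum_univ_eq_sum_range
                  (fun m => if J ≤ m then ((clip κ.val (γ (n (l + 1)) κ.val) m : ℕ) : ℝ) else 0) _
            _ = ((∑ m ∈ Finset.range (n (l + 1) + 1),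
                  if J ≤ m then clip κ.val (γ (n (l + 1)) κ.val) m else 0 : ℕ) : ℝ) := by
                rw [Nat.cast_sum]
                exact Finset.sum_congr rfl fun m _ => by split_ifs <;> simp
            _ = G κ.val := by rw [hnat, hG]
        have h4 : (∑ κ : Fin (n (l + 1) + 1),
            G κ.val * (connMatrix (n l) (n (l + 1)) *ᵥ vecIter γ n l) κ)
            = ∑ j : Fin (n l + 1), G (min j.val (n (l + 1))) * vecIter γ n l j := by
          have hexp : ∀ κ : Fin (n (l + 1) + 1),
              G κ.val * (connMatrix (n l) (n (l + 1)) *ᵥ vecIter γ n l) κ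
              = ∑ j : Fin (n l + 1), (if κ.val = min j.val (n (l + 1)) then
                  G κ.val * vecIter γ n l j else 0) := by
            intro κ
            have hwv : (connMatrix (n l) (n (l + 1)) *ᵥ vecIter γ n l) κ
                = ∑ j : Fin (n l + 1), (if κ.val = min j.val (n (l + 1)) then (1:ℝ) else 0) *
                    vecIter γ n l j := rfl
            rw [hwv, Finset.mul_sum]
            refine Finset.sum_congr rfl fun j _ => ?_
            split_ifs with h
            · ring
            · ring
          rw [Finset.sum_congr rfl (fun κ _ => hexp κ), Finset.sum_comm]
          refine Finset.sum_congr rfl fun j _ => ?_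
          have hlt : min j.val (n (l + 1)) < n (l + 1) + 1 :=
            Nat.lt_succ_of_le (min_le_right _ _)
          rw [Finset.sum_eq_single (⟨min j.val (n (l + 1)), hlt⟩ : Fin (n (l + 1) + 1))]
          · rw [if_pos rfl]
          · intro κ _ hne
            exact if_neg (fun hc => hne (Fin.ext hc))
          · intro hcon
            exact absurd (Finset.mem_univ _) hcon
        have h5 : (∑ m ∈ Finset.range (n l + 1), v m * g m)
            = ∑ j : Fin (n l + 1), G (min j.val (n (l + 1))) * vecIter γ n l j := by
          rw [← Fin.sum_univ_eq_sum_range (fun m => v m * g m) (n l + 1)]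
          refine Finset.sum_congr rfl fun j _ => ?_
          rw [hvi j]
          have hgj : g j.val = G (min j.val (n (l + 1))) := rfl
          rw [hgj]
          ring
        rw [h5, ← h4, h1]
        rw [Finset.sum_comm]
        exact (Finset.sum_congr rfl (fun κ _ => h2 κ)).symm
      calc (A1.card : ℝ)
          ≤ ∑ u ∈ Ul, g (minAct n l u) := hstep1
        _ = ∑ m ∈ Finset.range (n l + 1), d m * g m := hstep2
        _ ≤ ∑ m ∈ Finset.range (n l + 1), v m * g m := habel
        _ = _ := hstep3
  have h0 := key L 0
  have hls : ((Set.range (msig n W b L)).ncard : ℝ)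
      = ((Finset.univ.filter (fun w => w ∈ Set.range (msig n W b L) ∧
          0 ≤ minAct n L w)).card : ℝ) := by
    congr 1
    rw [Set.ncard_eq_toFinset_card _ (Set.toFinite _)]
    congr 1
    ext w
    simp [Set.Finite.mem_toFinset]
  rw [hls]
  refine le_trans h0 (Finset.sum_le_sum fun i _ => ?_)
  rw [if_pos (Nat.zero_le _)]
  exact le_abs_self _
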